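/- For 3 identical agents and 3(k+2) chores each of value -1 (k ≥ 0): MMS^3(M) = -(k+2); any bundle S of k+1 chores satisfies v(S) = -(k+1) ≥ MMS^3(M); yet after removing S, MMS^2(M \ S) = -⌈(2k+5)/2⌉ = -(k+3) < MMS^3(M), so the reduction strictly decreases the remaining agents' maximin shares. -/

import Mathlib

open Finset

/-- The 1-out-of-`d` maximin share of an agent with additive valuation `v`
over `m` items: the maximum over partitions of the items into `d` bundles
of the minimum bundle value. -/
noncomputable def MMS {m : ℕ} (d : ℕ) (v : Fin m → ℝ) : ℝ :=
  ⨆ P : Fin m → Fin d, ⨅ j : Fin d, ∑ i ∈ Finset.univ.filter (fun i => P i = j), v i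

lemma fiber_sum {m d : ℕ} (P : Fin m → Fin d) :
    ∑ j : Fin d, (Finset.univ.filter (fun i => P i = j)).card = m := by
  rw [← Finset.card_eq_sum_card_fiberwise (fun x _ => Finset.mem_univ (P x))]
  simp

lemma mms_const_neg_one (m d : ℕ) (hd : 0 < d) :
    MMS d (fun _ : Fin m => (-1 : ℝ)) = -(((m + d - 1) / d : ℕ) : ℝ) := by
  have hne : Nonempty (Fin d) := ⟨⟨0, hd⟩⟩
  set c := (m + d - 1) / d with hc
  have h1 := Nat.div_add_mod (m + d - 1) d
  rw [← hc] at h1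
  set r := (m + d - 1) % d with hr
  have h2 : r < d := Nat.mod_lt (m + d - 1) hd
  have hdc1 : m ≤ d * c := by omega
  have hdc2 : d * c ≤ m + d - 1 := by omega
  have hsum : ∀ (P : Fin m → Fin d) (j : Fin d),
      ∑ i ∈ Finset.univ.filter (fun i => P i = j), (fun _ : Fin m => (-1:ℝ)) i
        = -(((Finset.univ.filter (fun i => P i = j)).card : ℝ)) := by
    intro P j; simp
  unfold MMS
  apply le_antisymm
  · apply ciSup_le
    intro P
    obtain ⟨j, hj⟩ : ∃ j : Fin d, c ≤ (Finset.univ.filter (fun i => P i = j)).card := by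
      by_contra h
      push_neg at h
      have hs := fiber_sum P
      have hle : ∑ j : Fin d, ((Finset.univ.filter (fun i => P i = j)).card + 1)
          ≤ ∑ _j : Fin d, c :=
        Finset.sum_le_sum (fun j _ => h j)
      rw [Finset.sum_add_distrib, hs] at hle
      simp [Finset.sum_const, Finset.card_univ, Nat.mul_comm] at hle
      omega
    calc (⨅ j : Fin d, ∑ i ∈ Finset.univ.filter (fun i => P i = j),
            (fun _ : Fin m => (-1:ℝ)) i)
        ≤ ∑ i ∈ Finset.univ.filter (fun i => P i = j), (fun _ : Fin m => (-1:ℝ)) i :=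
          ciInf_le (Set.Finite.bddBelow (Set.finite_range _)) j
      _ = -(((Finset.univ.filter (fun i => P i = j)).card : ℝ)) := hsum P j
      _ ≤ -(c : ℝ) := by
          have : (c : ℝ) ≤ ((Finset.univ.filter (fun i => P i = j)).card : ℝ) :=
            Nat.cast_le.mpr hj
          linarith
  · -- construct the balanced partition
    set P₀ : Fin m → Fin d := fun i => ⟨i.val % d, Nat.mod_lt _ hd⟩ with hP₀
    have hcard : ∀ j : Fin d, (Finset.univ.filter (fun i => P₀ i = j)).card ≤ c := by
      intro j
      have : (Finset.univ.filter (fun i => P₀ i = j)).card ≤ (Finset.range c).card := by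
        apply Finset.card_le_card_of_injOn (fun i => i.val / d)
        · intro i hi
          simp only [Finset.coe_range, Set.mem_Iio]
          have him : (i.val : ℕ) < d * c := lt_of_lt_of_le i.isLt hdc1
          exact Nat.div_lt_of_lt_mul him
        · intro a ha b hb hab
          simp only [Finset.mem_coe, Finset.mem_filter, hP₀, Fin.ext_iff] at ha hb
          simp only at hab
          have e1 : d * (a.val / d) + a.val % d = a.val := Nat.div_add_mod _ _
          have e2 : d * (b.val / d) + b.val % d = b.val := Nat.div_add_mod _ _
          rw [hab] at e1
          exact Fin.ext (by omega)
      simpa using this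
    have hbdd : BddAbove (Set.range fun P : Fin m → Fin d =>
        ⨅ j : Fin d, ∑ i ∈ Finset.univ.filter (fun i => P i = j),
          (fun _ : Fin m => (-1:ℝ)) i) := by
      refine ⟨0, ?_⟩
      rintro x ⟨P, rfl⟩
      calc (⨅ j : Fin d, ∑ i ∈ Finset.univ.filter (fun i => P i = j),
              (fun _ : Fin m => (-1:ℝ)) i)
          ≤ ∑ i ∈ Finset.univ.filter (fun i => P i = ⟨0, hd⟩),
              (fun _ : Fin m => (-1:ℝ)) i :=
            ciInf_le (Set.Finite.bddBelow (Set.finite_range _)) _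
        _ = -(((Finset.univ.filter (fun i => P i = ⟨0, hd⟩)).card : ℝ)) := hsum P _
        _ ≤ 0 := by
            have := Nat.cast_nonneg (α := ℝ)
              (Finset.univ.filter (fun i => P i = ⟨0, hd⟩)).card
            linarith
    refine le_ciSup_of_le hbdd P₀ ?_
    apply le_ciInf
    intro j
    rw [hsum P₀ j]
    have : ((Finset.univ.filter (fun i => P₀ i = j)).card : ℝ) ≤ (c : ℝ) :=
      Nat.cast_le.mpr (hcard j)
    linarith

theorem stmt17 (k : ℕ) :
    MMS 3 (fun _ : Fin (3 * (k + 2)) => (-1 : ℝ)) = -((k : ℝ) + 2) ∧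
    (∀ S : Finset (Fin (3 * (k + 2))), S.card = k + 1 →
      ∑ i ∈ S, (fun _ : Fin (3 * (k + 2)) => (-1 : ℝ)) i = -((k : ℝ) + 1) ∧
      MMS 3 (fun _ : Fin (3 * (k + 2)) => (-1 : ℝ)) ≤ -((k : ℝ) + 1)) ∧
    MMS 2 (fun _ : Fin (2 * k + 5) => (-1 : ℝ)) = -((k : ℝ) + 3) ∧
    MMS 2 (fun _ : Fin (2 * k + 5) => (-1 : ℝ)) <
      MMS 3 (fun _ : Fin (3 * (k + 2)) => (-1 : ℝ)) := by
  have h3 : MMS 3 (fun _ : Fin (3 * (k + 2)) => (-1 : ℝ)) = -((k : ℝ) + 2) := by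
    rw [mms_const_neg_one _ 3 (by norm_num)]
    have : (3 * (k + 2) + 3 - 1) / 3 = k + 2 := by omega
    rw [this]; push_cast; ring
  have h2 : MMS 2 (fun _ : Fin (2 * k + 5) => (-1 : ℝ)) = -((k : ℝ) + 3) := by
    rw [mms_const_neg_one _ 2 (by norm_num)]
    have : (2 * k + 5 + 2 - 1) / 2 = k + 3 := by omega
    rw [this]; push_cast; ring
  refine ⟨h3, fun S hS => ⟨?_, ?_⟩, h2, ?_⟩
  · simp [hS]
  · rw [h3]; linarith
  · rw [h2, h3]; linarith
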